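/- For k = 2 and every t with 0 ≤ t ≤ 50, there exist no real numbers r, s ∈ (0,1) satisfying simultaneously: E_i(R) = E_i(P), E_i(R) ≥ E_i(S), E_s(S) = E_s(P), and (if t > 0) E_p(P) ≥ E_p(R) and E_p(P) ≥ E_p(S), where E_i(R) = s(1+k+t)(1−(1−r)^k)/(kr) − (1−s), E_i(P) = (1−s)∑_{b=0}^{k-1} C(k−1,b) r^b / C(k+t,b) − s, E_i(S) = −1 + (2−s)((k+1+t)/2)(1−r)^{k−1}, E_s(P) = ∑_{b=0}^{k} C(k,b) r^b / C(k+t,b), E_s(S) = −1 + (k+1+t)(1−r)^k, E_p(R) = s(1+k+t)(1−(1−r)^{k+1})/((k+1)r) − (1−s), E_p(P) = (1−s)∑_{b=0}^{k} C(k,b) r^b / C(k+t,b) − s, E_p(S) = −1 + (2−s)((k+1+t)/2)(1−r)^k. -/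
import Mathlib


/-- Expected payoff of a mixing (`r`-)player choosing Rock. -/
noncomputable def EiR (k t : ℕ) (r s : ℝ) : ℝ :=
  s * (1 + k + t) * ((1 - (1 - r) ^ k) / (k * r)) - (1 - s)

/-- Expected payoff of a mixing (`r`-)player choosing Paper. -/
noncomputable def EiP (k t : ℕ) (r s : ℝ) : ℝ :=
  (1 - s) * (∑ b ∈ Finset.range k, ((k - 1).choose b : ℝ) * r ^ b / ((k + t).choose b)) - s

/-- Expected payoff of a mixing (`r`-)player choosing Scissors. -/
noncomputable def EiS (k t : ℕ) (r s : ℝ) : ℝ :=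
  -1 + (2 - s) * (((k : ℝ) + 1 + t) / 2) * (1 - r) ^ (k - 1)

/-- Expected payoff of the `s`-player choosing Paper. -/
noncomputable def EsP (k t : ℕ) (r : ℝ) : ℝ :=
  ∑ b ∈ Finset.range (k + 1), (k.choose b : ℝ) * r ^ b / ((k + t).choose b)

/-- Expected payoff of the `s`-player choosing Scissors. -/
noncomputable def EsS (k t : ℕ) (r : ℝ) : ℝ :=
  -1 + ((k : ℝ) + 1 + t) * (1 - r) ^ k

/-- Expected payoff of a pure-Paper player choosing Rock. -/
noncomputable def EpR (k t : ℕ) (r s : ℝ) : ℝ :=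
  s * (1 + k + t) * ((1 - (1 - r) ^ (k + 1)) / ((k + 1) * r)) - (1 - s)

/-- Expected payoff of a pure-Paper player choosing Paper. -/
noncomputable def EpP (k t : ℕ) (r s : ℝ) : ℝ :=
  (1 - s) * (∑ b ∈ Finset.range (k + 1), (k.choose b : ℝ) * r ^ b / ((k + t).choose b)) - s

/-- Expected payoff of a pure-Paper player choosing Scissors. -/
noncomputable def EpS (k t : ℕ) (r s : ℝ) : ℝ :=
  -1 + (2 - s) * (((k : ℝ) + 1 + t) / 2) * (1 - r) ^ k

lemma key_aux (τ r s : ℝ) (hτ : 0 ≤ τ) (hr0 : 0 < r) (hr1 : r < 1)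
    (hs0 : 0 < s) (hs1 : s < 1)
    (h1 : s * (3 + τ) * ((2 - r) / 2) - (1 - s) = (1 - s) * (1 + r / (2 + τ)) - s)
    (h3 : -1 + (3 + τ) * (1 - r) ^ 2 = 1 + 2 * r / (2 + τ) + r ^ 2 / ((2 + τ) * (1 + τ) / 2))
    (h2 : s * (3 + τ) * ((2 - r) / 2) - (1 - s) ≥ -1 + (2 - s) * ((3 + τ) / 2) * (1 - r)) :
    False := by
  have h2τ : (0:ℝ) < 2 + τ := by linarith
  have h1τ : (0:ℝ) < 1 + τ := by linarith
  have hr2 : (0:ℝ) < 1 - r := by linarith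
  have hA : 2 ≤ (3 + τ) * (1 - r) ^ 2 := by
    have p1 : 0 ≤ 2 * r / (2 + τ) := by positivity
    have p2 : 0 ≤ r ^ 2 / ((2 + τ) * (1 + τ) / 2) := by positivity
    linarith
  have hd : r / (2 + τ) ≤ r / 2 := by
    rw [div_le_div_iff₀ h2τ (by norm_num)]
    nlinarith
  have hup : s * (3 + τ) * ((2 - r) / 2) - (1 - s) ≤ (1 - s) * (1 + r / 2) - s := by
    nlinarith [mul_le_mul_of_nonneg_left hd (by linarith : (0:ℝ) ≤ 1 - s)]
  have hES : -1 + (2 - s) * ((3 + τ) / 2) * (1 - r) ≤ (1 - s) * (1 + r / 2) - s := by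
    linarith
  have hmul := mul_le_mul_of_nonneg_right hES hr2.le
  nlinarith [hmul, hA, mul_pos hr0 (by linarith : (0:ℝ) < 1 - s),
    mul_le_mul_of_nonneg_left hA (by linarith : (0:ℝ) ≤ 2 - s)]

/-- For `k = 2` and `t ≤ 50` the Nash-equilibrium constraint system has no
solution with `r, s ∈ (0,1)`. -/
theorem stmt_14 (t : ℕ) (ht : t ≤ 50) :
    ¬ ∃ r s : ℝ, r ∈ Set.Ioo (0:ℝ) 1 ∧ s ∈ Set.Ioo (0:ℝ) 1 ∧
      EiR 2 t r s = EiP 2 t r s ∧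
      EiR 2 t r s ≥ EiS 2 t r s ∧
      EsS 2 t r = EsP 2 t r ∧
      (0 < t → EpP 2 t r s ≥ EpR 2 t r s ∧ EpP 2 t r s ≥ EpS 2 t r s) := by
  rintro ⟨r, s, ⟨hr0, hr1⟩, ⟨hs0, hs1⟩, h1, h2, h3, -⟩
  simp only [EiR, EiP, EiS, EsP, EsS, Finset.sum_range_succ, Finset.sum_range_zero,
    Nat.choose_zero_right, Nat.choose_one_right, Nat.choose_self, pow_zero, pow_one,
    Nat.cast_one, Nat.cast_ofNat, show (2:ℕ) - 1 = 1 from rfl] at h1 h2 h3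
  have hc2 : (((2 + t).choose 2 : ℕ) : ℝ) = (2 + (t:ℝ)) * (1 + (t:ℝ)) / 2 := by
    have hd2 : (2 + t).choose 2 * 2 = (2 + t) * (1 + t) := by
      have he : 2 ∣ (2 + t) * (2 + t - 1) := by
        rcases Nat.even_or_odd t with ⟨c, hc⟩ | ⟨c, hc⟩
        · exact Dvd.dvd.mul_right ⟨c + 1, by omega⟩ _
        · exact Dvd.dvd.mul_left ⟨c + 1, by omega⟩ _
      rw [Nat.choose_two_right, Nat.div_mul_cancel he]
      have h' : 2 + t - 1 = 1 + t := by omega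
      rw [h']
    have := congrArg (fun n : ℕ => (n : ℝ)) hd2
    push_cast at this
    linarith
  rw [hc2] at h3
  push_cast at h1 h2 h3
  have hrne : r ≠ 0 := ne_of_gt hr0
  have hpow : (1 - (1 - r) ^ 2) / (2 * r) = (2 - r) / 2 := by
    field_simp
    ring
  rw [hpow] at h1 h2
  have hτ : (0:ℝ) ≤ (t:ℝ) := Nat.cast_nonneg t
  have h1' : s * (3 + (t:ℝ)) * ((2 - r) / 2) - (1 - s) =
      (1 - s) * (1 + r / (2 + (t:ℝ))) - s := by linear_combination h1
  have h3' : -1 + (3 + (t:ℝ)) * (1 - r) ^ 2 =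
      1 + 2 * r / (2 + (t:ℝ)) + r ^ 2 / ((2 + (t:ℝ)) * (1 + (t:ℝ)) / 2) := by
    linear_combination h3
  have h2' : s * (3 + (t:ℝ)) * ((2 - r) / 2) - (1 - s) ≥
      -1 + (2 - s) * ((3 + (t:ℝ)) / 2) * (1 - r) := by
    have e1 : s * (3 + (t:ℝ)) * ((2 - r) / 2) = s * (1 + 2 + (t:ℝ)) * ((2 - r) / 2) := by ring
    have e2 : (2 - s) * ((3 + (t:ℝ)) / 2) * (1 - r) =
        (2 - s) * ((2 + 1 + (t:ℝ)) / 2) * (1 - r) := by ring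
    rw [e1, e2]; exact h2
  exact key_aux (t : ℝ) r s hτ hr0 hr1 hs0 hs1 h1' h3' h2'
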